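/- Let q ∈ (0,1), κ > 0, and let d ≥ 0 be a real number such that ⌈d⌉ > 2κ + 1 and ⌈d⌉ ≥ (2κ/q)·log(κ/q). Set D = (1−q)·d and α = exp(−(1−q)·(⌈d⌉ − d)). Then exp(−1) < exp(−(1−q)) < α ≤ 1, and (⌈d⌉ : ℝ)^κ · exp(−⌈d⌉) ≤ α · exp(−D). -/

import Mathlib

lemma log_le_div_e {t : ℝ} (ht : 0 < t) : Real.log t ≤ t / Real.exp 1 := by
  have h := Real.log_le_sub_one_of_pos (x := t / Real.exp 1) (by positivity)
  rw [Real.log_div (ne_of_gt ht) (Real.exp_ne_zero 1), Real.log_exp] at h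
  linarith

theorem scale_distance_bound
    (q κ d : ℝ) (hq0 : 0 < q) (hq1 : q < 1) (hκ : 0 < κ) (hd : 0 ≤ d)
    (hlarge1 : (⌈d⌉ : ℝ) > 2 * κ + 1)
    (hlarge2 : (⌈d⌉ : ℝ) ≥ (2 * κ / q) * Real.log (κ / q))
    (D α : ℝ) (hD : D = (1 - q) * d)
    (hα : α = Real.exp (-(1 - q) * ((⌈d⌉ : ℝ) - d))) :
    Real.exp (-1) < Real.exp (-(1 - q)) ∧
    Real.exp (-(1 - q)) < α ∧
    α ≤ 1 ∧
    (⌈d⌉ : ℝ) ^ κ * Real.exp (-(⌈d⌉ : ℝ)) ≤ α * Real.exp (-D) := by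
  set c : ℝ := (⌈d⌉ : ℝ) with hc
  have hc0 : (0:ℝ) < c := by nlinarith
  have hdc : d ≤ c := Int.le_ceil d
  have hcd1 : c - d < 1 := by
    have := Int.ceil_lt_add_one d
    linarith
  refine ⟨?_, ?_, ?_, ?_⟩
  · exact Real.exp_lt_exp.mpr (by linarith)
  · rw [hα]
    apply Real.exp_lt_exp.mpr
    nlinarith
  · rw [hα]
    have : -(1 - q) * (c - d) ≤ 0 := by nlinarith
    calc Real.exp (-(1 - q) * (c - d)) ≤ Real.exp 0 := Real.exp_le_exp.mpr this
      _ = 1 := Real.exp_zero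
  · have hkey : κ * Real.log c ≤ q * c := by
      have he2 : (2:ℝ) ≤ Real.exp 1 := by
        have := Real.add_one_le_exp 1; linarith
      have ht : 0 < c * q / κ := by positivity
      have h1 : κ * Real.log (c * q / κ) ≤ q * c / 2 := by
        have := log_le_div_e ht
        have h1' : κ * Real.log (c * q / κ) ≤ κ * (c * q / κ / Real.exp 1) := by
          exact mul_le_mul_of_nonneg_left this (le_of_lt hκ)
        have he0 : (0:ℝ) < Real.exp 1 := Real.exp_pos 1
        have : κ * (c * q / κ / Real.exp 1) = c * q / Real.exp 1 := by
          field_simp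
        rw [this] at h1'
        have hqc : 0 ≤ q * c := by positivity
        have : c * q / Real.exp 1 ≤ q * c / 2 := by
          rw [div_le_div_iff₀ he0 (by norm_num)]
          nlinarith [mul_le_mul_of_nonneg_left he2 hqc]
        linarith
      have h2 : κ * Real.log (κ / q) ≤ q * c / 2 := by
        have := hlarge2
        rw [ge_iff_le, div_mul_eq_mul_div, div_le_iff₀ hq0] at this
        nlinarith
      have hsplit : Real.log c = Real.log (c * q / κ) + Real.log (κ / q) := by
        rw [← Real.log_mul (ne_of_gt ht) (by positivity)]
        congr 1
        field_simp
      nlinarith [hsplit]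
    rw [hα, hD, ← Real.exp_add, Real.rpow_def_of_pos hc0, ← Real.exp_add]
    apply Real.exp_le_exp.mpr
    nlinarith
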